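/- Let (Ω, ℱ, P) be a probability space, X : Ω → ℝ^q a random vector whose first coordinate is the constant 1, Y : Ω → {0,1} with P(Y = 1 | σ(X)) = expit(β₀ᵀX) almost surely, s : ℝ^q → 𝒮 measurable, π : {0,1} × 𝒮 → (0,1] measurable, and R : Ω → {0,1} with E[R | σ(Y, X)] = π(Y, s(X)) almost surely. Define the offset-adjusted linear predictor γ(x) := β₀ᵀx + log( π(1, s(x)) / π(0, s(x)) ). Then for every bounded measurable g : ℝ^q → ℝ, E[ R · (Y − expit(γ(X))) · g(X) ] = 0. -/
import Mathlib


open MeasureTheory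

/-- The standard logistic (expit) function. -/
noncomputable def expit (t : ℝ) : ℝ := Real.exp t / (1 + Real.exp t)

lemma expit_nonneg (t : ℝ) : 0 ≤ expit t := by
  unfold expit; positivity

lemma expit_le_one (t : ℝ) : expit t ≤ 1 := by
  unfold expit
  rw [div_le_one (by positivity)]
  linarith [Real.exp_pos t]

lemma abs_expit_le_one (t : ℝ) : |expit t| ≤ 1 := by
  rw [abs_le]; constructor
  · linarith [expit_nonneg t]
  · exact expit_le_one t

lemma measurable_expit : Measurable expit :=
  Real.measurable_exp.div (measurable_const.add Real.measurable_exp)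

lemma integrable_of_bdd {Ω : Type*} [MeasurableSpace Ω] {μ : Measure Ω} [IsFiniteMeasure μ]
    {f : Ω → ℝ} (hf : Measurable f) {C : ℝ} (h : ∀ ω, |f ω| ≤ C) : Integrable f μ :=
  (integrable_const C).mono' hf.aestronglyMeasurable (Filter.Eventually.of_forall h)

lemma abs_mul_le' {a b c d : ℝ} (h1 : |a| ≤ c) (h2 : |b| ≤ d) : |a * b| ≤ c * d := by
  rw [abs_mul]
  exact mul_le_mul h1 h2 (abs_nonneg _) (le_trans (abs_nonneg _) h1)

/-- Key algebraic identity for the offset-adjusted expit. -/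
lemma expit_offset_key (t : ℝ) {π1 π0 : ℝ} (h1 : 0 < π1) (h0 : 0 < π0) :
    expit t * (π1 * (1 - expit (t + Real.log (π1 / π0)))) =
      (1 - expit t) * (π0 * expit (t + Real.log (π1 / π0))) := by
  have ha : 0 < π1 / π0 := div_pos h1 h0
  have hE := Real.exp_pos t
  have hexp : Real.exp (t + Real.log (π1 / π0)) = Real.exp t * (π1 / π0) := by
    rw [Real.exp_add, Real.exp_log ha]
  unfold expit
  rw [hexp]
  have d1 : (0 : ℝ) < 1 + Real.exp t := by positivity
  have d2 : (0 : ℝ) < 1 + Real.exp t * (π1 / π0) := by positivity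
  field_simp
  ring

/-- Tower-property helper: an integral of `f * r` with `f` measurable w.r.t. a
sub-σ-algebra `m` can be computed replacing `r` by (a version of) `μ[r|m]`. -/
lemma integral_mul_eq_integral_mul_condexp {Ω : Type*} [m0 : MeasurableSpace Ω]
    (μ : Measure Ω) [IsFiniteMeasure μ] {m : MeasurableSpace Ω} (hm : m ≤ m0)
    {f r ρ : Ω → ℝ} (hf : StronglyMeasurable[m] f) (hfr : Integrable (f * r) μ)
    (hr : Integrable r μ) (hρ : μ[r|m] =ᵐ[μ] ρ) :
    ∫ ω, f ω * r ω ∂μ = ∫ ω, f ω * ρ ω ∂μ := by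
  calc ∫ ω, f ω * r ω ∂μ = ∫ ω, (f * r) ω ∂μ := rfl
    _ = ∫ ω, (μ[f * r|m]) ω ∂μ := (integral_condExp hm).symm
    _ = ∫ ω, (f * μ[r|m]) ω ∂μ :=
        integral_congr_ae (condExp_mul_of_stronglyMeasurable_left hf hfr hr)
    _ = ∫ ω, f ω * ρ ω ∂μ := integral_congr_ae (hρ.mono fun ω h => by
        simp only [Pi.mul_apply, h])

/-- Asymptotic unbiasedness of the summands of the second (offset-adjusted)
estimating function.  If `X` has first coordinate identically `1`,
`P(Y = 1 | σ(X)) = expit(β₀ᵀX)` a.s., and `E[R | σ(Y,X)] = π(Y, s(X))` a.s. with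
`π` valued in `(0,1]` on `{0,1} × 𝒮`, then with
`γ(x) = β₀ᵀx + log(π(1, s(x))/π(0, s(x)))`, for every bounded measurable `g`,
`E[R (Y − expit(γ(X))) g(X)] = 0`. -/
theorem stmt7 {Ω : Type*} [MeasurableSpace Ω] (μ : Measure Ω) [IsProbabilityMeasure μ]
    {q : ℕ} {𝒮 : Type*} [MeasurableSpace 𝒮]
    (X : Ω → (Fin (q + 1) → ℝ)) (Y R : Ω → ℝ) (β₀ : Fin (q + 1) → ℝ)
    (s : (Fin (q + 1) → ℝ) → 𝒮) (π : ℝ → 𝒮 → ℝ)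
    (hX : Measurable X) (hY : Measurable Y) (hR : Measurable R) (hs : Measurable s)
    (hπ : Measurable fun p : ℝ × 𝒮 => π p.1 p.2)
    (hfirst : ∀ ω, X ω 0 = 1)
    (hY01 : ∀ ω, Y ω = 0 ∨ Y ω = 1) (hR01 : ∀ ω, R ω = 0 ∨ R ω = 1)
    (hπrange : ∀ y ∈ ({0, 1} : Set ℝ), ∀ st, π y st ∈ Set.Ioc (0 : ℝ) 1)
    (hmodel : μ[Y | MeasurableSpace.comap X inferInstance] =ᵐ[μ]
      fun ω => expit (∑ i, β₀ i * X ω i))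
    (hsel : μ[R | MeasurableSpace.comap (fun ω => (Y ω, X ω)) inferInstance] =ᵐ[μ]
      fun ω => π (Y ω) (s (X ω)))
    (g : (Fin (q + 1) → ℝ) → ℝ) (hgm : Measurable g) (M : ℝ) (hgb : ∀ x, |g x| ≤ M) :
    ∫ ω, R ω * ((Y ω - expit ((∑ i, β₀ i * X ω i) +
      Real.log (π 1 (s (X ω)) / π 0 (s (X ω))))) * g (X ω)) ∂μ = 0 := by
  have hM : 0 ≤ M := le_trans (abs_nonneg _) (hgb 0)
  -- basic positivity/bounds of π at 0 and 1
  have hπ1 : ∀ st, π 1 st ∈ Set.Ioc (0 : ℝ) 1 := hπrange 1 (by simp)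
  have hπ0 : ∀ st, π 0 st ∈ Set.Ioc (0 : ℝ) 1 := hπrange 0 (by simp)
  have hπ1abs : ∀ st, |π 1 st| ≤ 1 := fun st =>
    abs_le.mpr ⟨by linarith [(hπ1 st).1], (hπ1 st).2⟩
  have hπ0abs : ∀ st, |π 0 st| ≤ 1 := fun st =>
    abs_le.mpr ⟨by linarith [(hπ0 st).1], (hπ0 st).2⟩
  have hYabs : ∀ ω, |Y ω| ≤ 1 := fun ω => by rcases hY01 ω with h | h <;> simp [h]
  have hRabs : ∀ ω, |R ω| ≤ 1 := fun ω => by rcases hR01 ω with h | h <;> simp [h]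
  -- the linear predictor with offset
  set γ : (Fin (q + 1) → ℝ) → ℝ := fun x =>
    (∑ i, β₀ i * x i) + Real.log (π 1 (s x) / π 0 (s x)) with hγdef
  have hπ1m : Measurable fun x => π 1 (s x) := hπ.comp (measurable_const.prodMk hs)
  have hπ0m : Measurable fun x => π 0 (s x) := hπ.comp (measurable_const.prodMk hs)
  have hβm : Measurable fun x : Fin (q + 1) → ℝ => ∑ i, β₀ i * x i :=
    Finset.measurable_sum _ fun i _ => measurable_const.mul (measurable_pi_apply i)
  have hγm : Measurable γ := hβm.add (Real.measurable_log.comp (hπ1m.div hπ0m))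
  -- σ-algebras
  have hm₂ : MeasurableSpace.comap (fun ω => (Y ω, X ω)) inferInstance ≤ _ :=
    (hY.prodMk hX).comap_le
  have hm₁ : MeasurableSpace.comap X inferInstance ≤ _ := hX.comap_le
  have hYXm₂ : Measurable[MeasurableSpace.comap (fun ω => (Y ω, X ω)) inferInstance]
      fun ω => (Y ω, X ω) := Measurable.of_comap_le le_rfl
  have hXm₁ : Measurable[MeasurableSpace.comap X inferInstance] X :=
    Measurable.of_comap_le le_rfl
  -- the inner factor h
  set h : Ω → ℝ := fun ω => (Y ω - expit (γ (X ω))) * g (X ω) with hhdef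
  have hHm : Measurable fun p : ℝ × (Fin (q + 1) → ℝ) =>
      (p.1 - expit (γ p.2)) * g p.2 :=
    (measurable_fst.sub ((measurable_expit.comp hγm).comp measurable_snd)).mul
      (hgm.comp measurable_snd)
  have hhm₂ : StronglyMeasurable[MeasurableSpace.comap (fun ω => (Y ω, X ω)) inferInstance] h :=
    (hHm.comp hYXm₂).stronglyMeasurable
  have hhm : Measurable h := hHm.comp (hY.prodMk hX)
  have hhb : ∀ ω, |h ω| ≤ 2 * M := fun ω => by
    refine abs_mul_le' ?_ (hgb _)
    calc |Y ω - expit (γ (X ω))| ≤ |Y ω| + |expit (γ (X ω))| := abs_sub _ _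
      _ ≤ 1 + 1 := add_le_add (hYabs ω) (abs_expit_le_one _)
      _ = 2 := by norm_num
  -- Step 1: replace R by π(Y, s(X))
  have hRint : Integrable R μ := integrable_of_bdd hR hRabs
  have hhRint : Integrable (h * R) μ :=
    integrable_of_bdd (hhm.mul hR) (C := 2 * M * 1) fun ω => abs_mul_le' (hhb ω) (hRabs ω)
  have step1 : ∫ ω, R ω * ((Y ω - expit ((∑ i, β₀ i * X ω i) +
      Real.log (π 1 (s (X ω)) / π 0 (s (X ω))))) * g (X ω)) ∂μ
      = ∫ ω, h ω * π (Y ω) (s (X ω)) ∂μ := by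
    rw [show (∫ ω, R ω * ((Y ω - expit ((∑ i, β₀ i * X ω i) +
        Real.log (π 1 (s (X ω)) / π 0 (s (X ω))))) * g (X ω)) ∂μ)
        = ∫ ω, h ω * R ω ∂μ from integral_congr_ae (Filter.Eventually.of_forall
          fun ω => by rw [hhdef]; ring)]
    exact integral_mul_eq_integral_mul_condexp μ hm₂ hhm₂ hhRint hRint hsel
  rw [step1]
  -- Step 2: split on Y ∈ {0,1}
  set A : (Fin (q + 1) → ℝ) → ℝ := fun x => π 1 (s x) * ((1 - expit (γ x)) * g x) with hAdef
  set B : (Fin (q + 1) → ℝ) → ℝ := fun x => π 0 (s x) * ((0 - expit (γ x)) * g x) with hBdef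
  have hAm : Measurable A := hπ1m.mul
    (((measurable_const.sub (measurable_expit.comp hγm))).mul hgm)
  have hBm : Measurable B := hπ0m.mul
    (((measurable_const.sub (measurable_expit.comp hγm))).mul hgm)
  have hAb : ∀ x, |A x| ≤ 2 * M := fun x => by
    have : |(1 - expit (γ x)) * g x| ≤ 2 * M := by
      refine abs_mul_le' ?_ (hgb x)
      calc |1 - expit (γ x)| ≤ |(1:ℝ)| + |expit (γ x)| := abs_sub _ _
        _ ≤ 1 + 1 := by simpa using abs_expit_le_one (γ x)
        _ = 2 := by norm_num
    calc |A x| ≤ 1 * (2 * M) := abs_mul_le' (hπ1abs (s x)) this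
      _ = 2 * M := one_mul _
  have hBb : ∀ x, |B x| ≤ 2 * M := fun x => by
    have : |(0 - expit (γ x)) * g x| ≤ 2 * M := by
      refine abs_mul_le' ?_ (hgb x)
      calc |0 - expit (γ x)| = |expit (γ x)| := by rw [zero_sub, abs_neg]
        _ ≤ 1 := abs_expit_le_one _
        _ ≤ 2 := by norm_num
    calc |B x| ≤ 1 * (2 * M) := abs_mul_le' (hπ0abs (s x)) this
      _ = 2 * M := one_mul _
  have split : ∀ ω, h ω * π (Y ω) (s (X ω))
      = (A (X ω) - B (X ω)) * Y ω + B (X ω) := by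
    intro ω
    rcases hY01 ω with hy | hy <;> rw [hhdef, hAdef, hBdef] <;> simp only [hy] <;> ring
  rw [integral_congr_ae (Filter.Eventually.of_forall split)]
  have hCint : Integrable (fun ω => (A (X ω) - B (X ω)) * Y ω) μ :=
    integrable_of_bdd (((hAm.sub hBm).comp hX).mul hY) (C := (2 * M + 2 * M) * 1)
      fun ω => abs_mul_le' (le_trans (abs_sub _ _)
        (add_le_add (hAb _) (hBb _))) (hYabs ω)
  have hBint : Integrable (fun ω => B (X ω)) μ :=
    integrable_of_bdd (hBm.comp hX) fun ω => hBb (X ω)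
  rw [integral_add hCint hBint]
  -- Step 3: replace Y by expit(β₀ᵀX)
  have hYint : Integrable Y μ := integrable_of_bdd hY hYabs
  have hCYint : Integrable ((fun ω => A (X ω) - B (X ω)) * Y) μ := hCint
  have hCm₁ : StronglyMeasurable[MeasurableSpace.comap X inferInstance]
      fun ω => A (X ω) - B (X ω) :=
    ((hAm.sub hBm).comp hXm₁).stronglyMeasurable
  have step3 : ∫ ω, (A (X ω) - B (X ω)) * Y ω ∂μ
      = ∫ ω, (A (X ω) - B (X ω)) * expit (∑ i, β₀ i * X ω i) ∂μ :=
    integral_mul_eq_integral_mul_condexp μ hm₁ hCm₁ hCYint hYint hmodel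
  rw [step3]
  -- Step 4: pointwise vanishing
  have key : ∀ x : Fin (q + 1) → ℝ,
      (A x - B x) * expit (∑ i, β₀ i * x i) + B x = 0 := by
    intro x
    have hk := expit_offset_key (∑ i, β₀ i * x i) (hπ1 (s x)).1 (hπ0 (s x)).1
    rw [hAdef, hBdef, hγdef]
    linear_combination g x * hk
  have hPint : Integrable (fun ω => (A (X ω) - B (X ω)) * expit (∑ i, β₀ i * X ω i)) μ :=
    integrable_of_bdd (((hAm.sub hBm).comp hX).mul
      (measurable_expit.comp (hβm.comp hX))) (C := (2 * M + 2 * M) * 1)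
      fun ω => abs_mul_le' (le_trans (abs_sub _ _)
        (add_le_add (hAb _) (hBb _))) (abs_expit_le_one _)
  rw [← integral_add hPint hBint]
  calc ∫ ω, ((A (X ω) - B (X ω)) * expit (∑ i, β₀ i * X ω i) + B (X ω)) ∂μ
      = ∫ _ω, (0 : ℝ) ∂μ :=
        integral_congr_ae (Filter.Eventually.of_forall fun ω => key (X ω))
    _ = 0 := integral_zero _ _
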